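/- Let f: [0,1]² → R be continuous, f̄(u₁,u₂,v₁,v₂) = f(u₁∧u₂, v₁∧v₂). Then for all s<t, σ<τ and p ≥ 1, the 2D p-variation of f over [s,t]×[σ,τ] equals the 4D p-variation of f̄ over [s,t]²×[σ,τ]². -/

import Mathlib

open Set
open scoped ENNReal

noncomputable section

/-- Rectangular increment of `f : ℝ → ℝ → ℝ` over the rectangle `[a,b] × [c,d]`. -/
def inc2 (f : ℝ → ℝ → ℝ) (a b c d : ℝ) : ℝ := f b d - f b c - f a d + f a c

/-- 4D rectangular increment of `g : ℝ⁴ → ℝ` over a box (alternating sum over corners). -/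
def inc4 (g : ℝ → ℝ → ℝ → ℝ → ℝ) (a₁ b₁ a₂ b₂ a₃ b₃ a₄ b₄ : ℝ) : ℝ :=
  inc2 (fun u₁ u₂ => inc2 (fun v₁ v₂ => g u₁ u₂ v₁ v₂) a₃ b₃ a₄ b₄) a₁ b₁ a₂ b₂

/-- A grid (partition) of the interval `[s,t]`. -/
structure Grid (s t : ℝ) where
  n : ℕ
  pts : Fin (n + 1) → ℝ
  mono : Monotone pts
  first : pts 0 = s
  last : pts (Fin.last n) = t

/-- 2D `p`-variation of `f` over `[s,t] × [u,v]` (supremum over grid partitions). -/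
def V2 (p : ℝ) (f : ℝ → ℝ → ℝ) (s t u v : ℝ) : ℝ≥0∞ :=
  ⨆ (D : Grid s t) (E : Grid u v),
    (∑ i : Fin D.n, ∑ j : Fin E.n,
      (ENNReal.ofReal
        |inc2 f (D.pts i.castSucc) (D.pts i.succ) (E.pts j.castSucc) (E.pts j.succ)|) ^ p)
      ^ (1 / p)

/-- 4D `p`-variation of `g` over `I₁ × I₂ × I₃ × I₄` (supremum over grid partitions of the
four intervals of the sum of `p`-th powers of 4D rectangular increments). -/
def V4 (p : ℝ) (g : ℝ → ℝ → ℝ → ℝ → ℝ) (s₁ t₁ s₂ t₂ s₃ t₃ s₄ t₄ : ℝ) : ℝ≥0∞ :=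
  ⨆ (D₁ : Grid s₁ t₁) (D₂ : Grid s₂ t₂) (D₃ : Grid s₃ t₃) (D₄ : Grid s₄ t₄),
    (∑ i₁ : Fin D₁.n, ∑ i₂ : Fin D₂.n, ∑ i₃ : Fin D₃.n, ∑ i₄ : Fin D₄.n,
      (ENNReal.ofReal
        |inc4 g (D₁.pts i₁.castSucc) (D₁.pts i₁.succ) (D₂.pts i₂.castSucc) (D₂.pts i₂.succ)
          (D₃.pts i₃.castSucc) (D₃.pts i₃.succ) (D₄.pts i₄.castSucc) (D₄.pts i₄.succ)|) ^ p)
      ^ (1 / p)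

/-! ### Auxiliary lemmas -/

lemma inc2_min (h : ℝ → ℝ) (a₁ b₁ a₂ b₂ : ℝ) (h1 : a₁ ≤ b₁) (h2 : a₂ ≤ b₂) :
    inc2 (fun u₁ u₂ => h (min u₁ u₂)) a₁ b₁ a₂ b₂
      = h (min b₁ b₂) - h (min (max a₁ a₂) (min b₁ b₂)) := by
  unfold inc2
  simp only [min_def, max_def]
  split_ifs
  all_goals try ring
  all_goals try linarith
  all_goals (rw [show b₁ = a₂ by linarith]; ring)

lemma inc4_min (f : ℝ → ℝ → ℝ) (a₁ b₁ a₂ b₂ a₃ b₃ a₄ b₄ : ℝ)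
    (h1 : a₁ ≤ b₁) (h2 : a₂ ≤ b₂) (h3 : a₃ ≤ b₃) (h4 : a₄ ≤ b₄) :
    inc4 (fun u₁ u₂ v₁ v₂ => f (min u₁ u₂) (min v₁ v₂)) a₁ b₁ a₂ b₂ a₃ b₃ a₄ b₄
      = inc2 f (min (max a₁ a₂) (min b₁ b₂)) (min b₁ b₂)
              (min (max a₃ a₄) (min b₃ b₄)) (min b₃ b₄) := by
  have inner : ∀ u₁ u₂ : ℝ, inc2 (fun v₁ v₂ => f (min u₁ u₂) (min v₁ v₂)) a₃ b₃ a₄ b₄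
      = f (min u₁ u₂) (min b₃ b₄) - f (min u₁ u₂) (min (max a₃ a₄) (min b₃ b₄)) :=
    fun u₁ u₂ => inc2_min (f (min u₁ u₂)) _ _ _ _ h3 h4
  unfold inc4
  simp only [inner]
  have e1 := inc2_min (fun y => f y (min b₃ b₄)) a₁ b₁ a₂ b₂ h1 h2
  have e2 := inc2_min (fun y => f y (min (max a₃ a₄) (min b₃ b₄))) a₁ b₁ a₂ b₂ h1 h2
  simp only [inc2] at e1 e2 ⊢
  linarith

lemma Grid.castSucc_le_succ_pts {s t : ℝ} (G : Grid s t) (i : Fin G.n) :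
    G.pts i.castSucc ≤ G.pts i.succ :=
  G.mono (by simp [Fin.le_def])

lemma grid_unique {s t : ℝ} (G : Grid s t) {i i' : Fin G.n} {a b : ℝ}
    (h1 : G.pts i.castSucc ≤ a) (h2 : b ≤ G.pts i.succ)
    (h1' : G.pts i'.castSucc ≤ a) (h2' : b ≤ G.pts i'.succ) (hab : a < b) : i = i' := by
  by_contra hne
  rcases lt_or_gt_of_ne hne with h | h
  · have hle : (i.succ : Fin (G.n+1)) ≤ i'.castSucc := by
      simp only [Fin.le_def, Fin.lt_def, Fin.val_succ, Fin.coe_castSucc] at h ⊢; omega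
    have := G.mono hle
    linarith
  · have hle : (i'.succ : Fin (G.n+1)) ≤ i.castSucc := by
      simp only [Fin.le_def, Fin.lt_def, Fin.val_succ, Fin.coe_castSucc] at h ⊢; omega
    have := G.mono hle
    linarith

/-- Common refinement of two grids of the same interval. -/
lemma exists_merge {s t : ℝ} (hst : s < t) (G₁ G₂ : Grid s t) :
    ∃ M : Grid s t, 0 < M.n ∧
      ∀ (i₁ : Fin G₁.n) (i₂ : Fin G₂.n),
        max (G₁.pts i₁.castSucc) (G₂.pts i₂.castSucc) < min (G₁.pts i₁.succ) (G₂.pts i₂.succ) →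
        ∃ k : Fin M.n,
          M.pts k.castSucc = max (G₁.pts i₁.castSucc) (G₂.pts i₂.castSucc) ∧
          M.pts k.succ = min (G₁.pts i₁.succ) (G₂.pts i₂.succ) := by
  classical
  set S : Finset ℝ := Finset.image G₁.pts Finset.univ ∪ Finset.image G₂.pts Finset.univ with hS
  have hmemS : ∀ x, x ∈ S ↔ (∃ j, G₁.pts j = x) ∨ ∃ j, G₂.pts j = x := by
    intro x; simp [hS]
  have hsS : s ∈ S := (hmemS s).2 (Or.inl ⟨0, G₁.first⟩)
  have htS : t ∈ S := (hmemS t).2 (Or.inl ⟨Fin.last _, G₁.last⟩)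
  have hbound : ∀ x ∈ S, s ≤ x ∧ x ≤ t := by
    intro x hx
    rcases (hmemS x).1 hx with ⟨j, rfl⟩ | ⟨j, rfl⟩
    · constructor
      · have h := G₁.mono (Fin.zero_le j); rwa [G₁.first] at h
      · have h := G₁.mono (Fin.le_last j); rwa [G₁.last] at h
    · constructor
      · have h := G₂.mono (Fin.zero_le j); rwa [G₂.first] at h
      · have h := G₂.mono (Fin.le_last j); rwa [G₂.last] at h
  set L : List ℝ := S.sort (· ≤ ·) with hL
  have hlen : L.length = S.card := S.length_sort _
  have hLS : ∀ x, x ∈ L ↔ x ∈ S := fun x => Finset.mem_sort _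
  have hLs : L.SortedLT := S.sortedLT_sort
  have hmono : StrictMono L.get := hLs.strictMono_get
  have hcard2 : 2 ≤ S.card := by
    refine Finset.one_lt_card.2 ⟨s, hsS, t, htS, ne_of_lt hst⟩
  have hpos : 0 < L.length := by omega
  set n : ℕ := L.length - 1 with hn
  have hn1 : n + 1 = L.length := by omega
  have hnpos : 0 < n := by omega
  -- define the merged grid
  have hgetval : ∀ (j j' : Fin L.length), j.val = j'.val → L.get j = L.get j' := by
    intro j j' h; congr 1; exact Fin.ext h
  refine ⟨⟨n, fun i => L.get (Fin.cast hn1 i), ?_, ?_, ?_⟩, hnpos, ?_⟩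
  · intro i j hij
    apply hmono.monotone
    rw [Fin.le_def]
    simp only [Fin.coe_cast]
    exact hij
  · -- first
    have hmem0 : L.get (Fin.cast hn1 0) ∈ S := (hLS _).1 (L.get_mem _)
    have h1 : s ≤ L.get (Fin.cast hn1 0) := (hbound _ hmem0).1
    obtain ⟨j, hj⟩ := List.mem_iff_get.mp ((hLS s).2 hsS)
    have h2 : L.get (Fin.cast hn1 0) ≤ s := by
      rw [← hj]; exact hmono.monotone (by simp [Fin.le_def])
    linarith
  · -- last
    have hmem : L.get (Fin.cast hn1 (Fin.last n)) ∈ S := (hLS _).1 (L.get_mem _)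
    have h1 : L.get (Fin.cast hn1 (Fin.last n)) ≤ t := (hbound _ hmem).2
    obtain ⟨j, hj⟩ := List.mem_iff_get.mp ((hLS t).2 htS)
    have h2 : t ≤ L.get (Fin.cast hn1 (Fin.last n)) := by
      rw [← hj]
      refine hmono.monotone ?_
      simp only [Fin.le_def, Fin.coe_cast, Fin.val_last]
      omega
    linarith
  · -- adjacency
    intro i₁ i₂ hlt
    set a : ℝ := max (G₁.pts i₁.castSucc) (G₂.pts i₂.castSucc) with ha
    set b : ℝ := min (G₁.pts i₁.succ) (G₂.pts i₂.succ) with hb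
    have haS : a ∈ S := by
      rcases max_choice (G₁.pts i₁.castSucc) (G₂.pts i₂.castSucc) with h | h <;> rw [ha, h]
      · exact (hmemS _).2 (Or.inl ⟨_, rfl⟩)
      · exact (hmemS _).2 (Or.inr ⟨_, rfl⟩)
    have hbS : b ∈ S := by
      rcases min_choice (G₁.pts i₁.succ) (G₂.pts i₂.succ) with h | h <;> rw [hb, h]
      · exact (hmemS _).2 (Or.inl ⟨_, rfl⟩)
      · exact (hmemS _).2 (Or.inr ⟨_, rfl⟩)
    have hno : ∀ x ∈ S, ¬(a < x ∧ x < b) := by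
      rintro x hx ⟨hax, hxb⟩
      have hx' := (hmemS x).1 hx
      rcases hx' with ⟨j, rfl⟩ | ⟨j, rfl⟩
      · have hcs : G₁.pts i₁.castSucc < G₁.pts j := lt_of_le_of_lt (le_max_left _ _) hax
        have hjb : G₁.pts j < G₁.pts i₁.succ := lt_of_lt_of_le hxb (min_le_left _ _)
        have h1 : i₁.castSucc < j := by
          by_contra hc
          push_neg at hc
          exact absurd (G₁.mono hc) (not_le.2 hcs)
        have h2 : (i₁.succ : Fin (G₁.n+1)) ≤ j := by
          simp only [Fin.lt_def, Fin.coe_castSucc] at h1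
          simp only [Fin.le_def, Fin.val_succ]
          omega
        exact absurd (G₁.mono h2) (not_le.2 hjb)
      · have hcs : G₂.pts i₂.castSucc < G₂.pts j := lt_of_le_of_lt (le_max_right _ _) hax
        have hjb : G₂.pts j < G₂.pts i₂.succ := lt_of_lt_of_le hxb (min_le_right _ _)
        have h1 : i₂.castSucc < j := by
          by_contra hc
          push_neg at hc
          exact absurd (G₂.mono hc) (not_le.2 hcs)
        have h2 : (i₂.succ : Fin (G₂.n+1)) ≤ j := by
          simp only [Fin.lt_def, Fin.coe_castSucc] at h1
          simp only [Fin.le_def, Fin.val_succ]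
          omega
        exact absurd (G₂.mono h2) (not_le.2 hjb)
    obtain ⟨ja, hja⟩ := List.mem_iff_get.mp ((hLS a).2 haS)
    obtain ⟨jb, hjb⟩ := List.mem_iff_get.mp ((hLS b).2 hbS)
    have hjajb : ja < jb := by
      have h : L.get ja < L.get jb := by rw [hja, hjb]; exact hlt
      exact hmono.lt_iff_lt.mp h
    have hsuc : jb.val = ja.val + 1 := by
      by_contra hc
      have h1 : ja.val + 1 < jb.val := by
        have : ja.val < jb.val := hjajb
        omega
      have hlt2 : ja.val + 1 < L.length := lt_trans h1 jb.isLt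
      set x := L.get ⟨ja.val + 1, hlt2⟩ with hx
      have hxS : x ∈ S := (hLS _).1 (L.get_mem _)
      have hax : a < x := by
        rw [← hja]; exact hmono (by simp [Fin.lt_def])
      have hxb : x < b := by
        rw [← hjb]; exact hmono (by simp [Fin.lt_def]; omega)
      exact hno x hxS ⟨hax, hxb⟩
    have hjan : ja.val < n := by
      have := jb.isLt
      omega
    refine ⟨⟨ja.val, hjan⟩, ?_, ?_⟩
    · rw [← hja]; exact hgetval _ _ (by simp)
    · rw [← hjb]; exact hgetval _ _ (by simp [hsuc])

lemma inc2_degen_left (f : ℝ → ℝ → ℝ) (c e g : ℝ) : inc2 f c c e g = 0 := by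
  unfold inc2; ring

lemma inc2_degen_right (f : ℝ → ℝ → ℝ) (c d e : ℝ) : inc2 f c d e e = 0 := by
  unfold inc2; ring


lemma diag_term_eq (f : ℝ → ℝ → ℝ) {s t σ τ : ℝ} (D : Grid s t) (E : Grid σ τ)
    (i : Fin D.n) (j : Fin E.n) :
    inc2 f (D.pts i.castSucc) (D.pts i.succ) (E.pts j.castSucc) (E.pts j.succ)
      = inc4 (fun u₁ u₂ v₁ v₂ => f (min u₁ u₂) (min v₁ v₂))
          (D.pts i.castSucc) (D.pts i.succ) (D.pts i.castSucc) (D.pts i.succ)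
          (E.pts j.castSucc) (E.pts j.succ) (E.pts j.castSucc) (E.pts j.succ) := by
  rw [inc4_min _ _ _ _ _ _ _ _ _ (D.castSucc_le_succ_pts i) (D.castSucc_le_succ_pts i)
    (E.castSucc_le_succ_pts j) (E.castSucc_le_succ_pts j)]
  rw [min_self, min_self, max_self, max_self,
    min_eq_left (D.castSucc_le_succ_pts i), min_eq_left (E.castSucc_le_succ_pts j)]

lemma diag_sum_le (f : ℝ → ℝ → ℝ) (p : ℝ) {s t σ τ : ℝ} (D : Grid s t) (E : Grid σ τ) :
    (∑ i : Fin D.n, ∑ j : Fin E.n,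
      (ENNReal.ofReal
        |inc2 f (D.pts i.castSucc) (D.pts i.succ) (E.pts j.castSucc) (E.pts j.succ)|) ^ p)
      ≤ ∑ i₁ : Fin D.n, ∑ i₂ : Fin D.n, ∑ i₃ : Fin E.n, ∑ i₄ : Fin E.n,
        (ENNReal.ofReal
          |inc4 (fun u₁ u₂ v₁ v₂ => f (min u₁ u₂) (min v₁ v₂))
            (D.pts i₁.castSucc) (D.pts i₁.succ) (D.pts i₂.castSucc) (D.pts i₂.succ)
            (E.pts i₃.castSucc) (E.pts i₃.succ) (E.pts i₄.castSucc) (E.pts i₄.succ)|) ^ p := by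
  refine Finset.sum_le_sum fun i _ => ?_
  refine le_trans ?_ (Finset.single_le_sum (fun _ _ => zero_le) (Finset.mem_univ i))
  refine Finset.sum_le_sum fun j _ => ?_
  refine le_trans ?_ (Finset.single_le_sum (fun _ _ => zero_le) (Finset.mem_univ j))
  exact le_of_eq (by rw [diag_term_eq f D E i j])

lemma sum_le_of_inj {ι κ : Type*} [Fintype ι] [Fintype κ] (T : ι → ℝ≥0∞) (T' : κ → ℝ≥0∞)
    (ψ : ι → κ) (hval : ∀ x, T x ≠ 0 → T x = T' (ψ x))
    (hinj : ∀ x y, T x ≠ 0 → T y ≠ 0 → ψ x = ψ y → x = y) :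
    ∑ x, T x ≤ ∑ y, T' y := by
  classical
  calc ∑ x, T x = ∑ x ∈ Finset.univ.filter (fun x => T x ≠ 0), T x :=
        (Finset.sum_filter_ne_zero _).symm
    _ = ∑ x ∈ Finset.univ.filter (fun x => T x ≠ 0), T' (ψ x) :=
        Finset.sum_congr rfl (fun x hx => hval x (Finset.mem_filter.mp hx).2)
    _ = ∑ y ∈ (Finset.univ.filter (fun x => T x ≠ 0)).image ψ, T' y :=
        (Finset.sum_image (fun x hx y hy h =>
          hinj x y (Finset.mem_filter.mp hx).2 (Finset.mem_filter.mp hy).2 h)).symm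
    _ ≤ ∑ y, T' y := Finset.sum_le_sum_of_subset (Finset.subset_univ _)

lemma key_merge {s t σ τ : ℝ} (f : ℝ → ℝ → ℝ) (p : ℝ) (hp0 : 0 < p)
    (hst : s < t) (hστ : σ < τ)
    (D₁ D₂ : Grid s t) (D₃ D₄ : Grid σ τ) :
    ∃ (M : Grid s t) (M' : Grid σ τ),
      (∑ i₁ : Fin D₁.n, ∑ i₂ : Fin D₂.n, ∑ i₃ : Fin D₃.n, ∑ i₄ : Fin D₄.n,
        (ENNReal.ofReal
          |inc4 (fun u₁ u₂ v₁ v₂ => f (min u₁ u₂) (min v₁ v₂))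
            (D₁.pts i₁.castSucc) (D₁.pts i₁.succ) (D₂.pts i₂.castSucc) (D₂.pts i₂.succ)
            (D₃.pts i₃.castSucc) (D₃.pts i₃.succ) (D₄.pts i₄.castSucc) (D₄.pts i₄.succ)|) ^ p)
      ≤ ∑ k : Fin M.n, ∑ l : Fin M'.n,
        (ENNReal.ofReal
          |inc2 f (M.pts k.castSucc) (M.pts k.succ) (M'.pts l.castSucc) (M'.pts l.succ)|) ^ p := by
  classical
  obtain ⟨M, hM0, hMadj⟩ := exists_merge hst D₁ D₂
  obtain ⟨M', hM'0, hM'adj⟩ := exists_merge hστ D₃ D₄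
  refine ⟨M, M', ?_⟩
  set T : (Fin D₁.n × Fin D₂.n) × (Fin D₃.n × Fin D₄.n) → ℝ≥0∞ := fun x =>
    (ENNReal.ofReal
      |inc4 (fun u₁ u₂ v₁ v₂ => f (min u₁ u₂) (min v₁ v₂))
        (D₁.pts x.1.1.castSucc) (D₁.pts x.1.1.succ) (D₂.pts x.1.2.castSucc) (D₂.pts x.1.2.succ)
        (D₃.pts x.2.1.castSucc) (D₃.pts x.2.1.succ) (D₄.pts x.2.2.castSucc) (D₄.pts x.2.2.succ)|)
      ^ p with hT
  set T' : Fin M.n × Fin M'.n → ℝ≥0∞ := fun y =>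
    (ENNReal.ofReal
      |inc2 f (M.pts y.1.castSucc) (M.pts y.1.succ) (M'.pts y.2.castSucc) (M'.pts y.2.succ)|)
      ^ p with hT'
  have hL : (∑ i₁ : Fin D₁.n, ∑ i₂ : Fin D₂.n, ∑ i₃ : Fin D₃.n, ∑ i₄ : Fin D₄.n,
      (ENNReal.ofReal
        |inc4 (fun u₁ u₂ v₁ v₂ => f (min u₁ u₂) (min v₁ v₂))
          (D₁.pts i₁.castSucc) (D₁.pts i₁.succ) (D₂.pts i₂.castSucc) (D₂.pts i₂.succ)
          (D₃.pts i₃.castSucc) (D₃.pts i₃.succ) (D₄.pts i₄.castSucc) (D₄.pts i₄.succ)|) ^ p)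
      = ∑ x : (Fin D₁.n × Fin D₂.n) × (Fin D₃.n × Fin D₄.n), T x := by
    rw [hT]; simp only [Fintype.sum_prod_type]
  have hR : (∑ k : Fin M.n, ∑ l : Fin M'.n,
      (ENNReal.ofReal
        |inc2 f (M.pts k.castSucc) (M.pts k.succ) (M'.pts l.castSucc) (M'.pts l.succ)|) ^ p)
      = ∑ y : Fin M.n × Fin M'.n, T' y := by
    rw [hT']; simp only [Fintype.sum_prod_type]
  rw [hL, hR]
  -- the condition for a nondegenerate intersection
  set P : (Fin D₁.n × Fin D₂.n) × (Fin D₃.n × Fin D₄.n) → Prop := fun x =>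
    (max (D₁.pts x.1.1.castSucc) (D₂.pts x.1.2.castSucc)
        < min (D₁.pts x.1.1.succ) (D₂.pts x.1.2.succ)) ∧
    (max (D₃.pts x.2.1.castSucc) (D₄.pts x.2.2.castSucc)
        < min (D₃.pts x.2.1.succ) (D₄.pts x.2.2.succ)) with hP
  have hTzero : ∀ x, ¬ P x → T x = 0 := by
    intro x hPx
    rw [hT]
    simp only
    rw [inc4_min _ _ _ _ _ _ _ _ _ (D₁.castSucc_le_succ_pts x.1.1) (D₂.castSucc_le_succ_pts x.1.2)
      (D₃.castSucc_le_succ_pts x.2.1) (D₄.castSucc_le_succ_pts x.2.2)]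
    rw [hP] at hPx
    rcases not_and_or.mp hPx with h | h
    · rw [min_eq_right (not_lt.mp h), inc2_degen_left, abs_zero, ENNReal.ofReal_zero,
        ENNReal.zero_rpow_of_pos hp0]
    · rw [min_eq_right (not_lt.mp h), inc2_degen_right, abs_zero, ENNReal.ofReal_zero,
        ENNReal.zero_rpow_of_pos hp0]
  refine sum_le_of_inj T T'
    (fun x => if hx : P x then
      ((hMadj x.1.1 x.1.2 hx.1).choose, (hM'adj x.2.1 x.2.2 hx.2).choose)
      else (⟨0, hM0⟩, ⟨0, hM'0⟩)) ?_ ?_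
  · -- values agree on the support
    intro x hx
    have hPx : P x := by
      by_contra h
      exact hx (hTzero x h)
    simp only [dif_pos hPx]
    obtain ⟨e1, e2⟩ := (hMadj x.1.1 x.1.2 hPx.1).choose_spec
    obtain ⟨e3, e4⟩ := (hM'adj x.2.1 x.2.2 hPx.2).choose_spec
    rw [hT, hT']
    simp only
    rw [e1, e2, e3, e4]
    rw [inc4_min _ _ _ _ _ _ _ _ _ (D₁.castSucc_le_succ_pts x.1.1) (D₂.castSucc_le_succ_pts x.1.2)
      (D₃.castSucc_le_succ_pts x.2.1) (D₄.castSucc_le_succ_pts x.2.2)]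
    rw [min_eq_left (le_of_lt hPx.1), min_eq_left (le_of_lt hPx.2)]
  · -- injectivity on the support
    intro x y hx hy hxy
    have hPx : P x := by by_contra h; exact hx (hTzero x h)
    have hPy : P y := by by_contra h; exact hy (hTzero y h)
    simp only [dif_pos hPx, dif_pos hPy] at hxy
    have hk : (hMadj x.1.1 x.1.2 hPx.1).choose = (hMadj y.1.1 y.1.2 hPy.1).choose :=
      congrArg Prod.fst hxy
    have hl : (hM'adj x.2.1 x.2.2 hPx.2).choose = (hM'adj y.2.1 y.2.2 hPy.2).choose :=
      congrArg Prod.snd hxy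
    obtain ⟨e1, e2⟩ := (hMadj x.1.1 x.1.2 hPx.1).choose_spec
    obtain ⟨e3, e4⟩ := (hM'adj x.2.1 x.2.2 hPx.2).choose_spec
    obtain ⟨f1, f2⟩ := (hMadj y.1.1 y.1.2 hPy.1).choose_spec
    obtain ⟨f3, f4⟩ := (hM'adj y.2.1 y.2.2 hPy.2).choose_spec
    rw [hk] at e1 e2
    rw [hl] at e3 e4
    have emax : max (D₁.pts x.1.1.castSucc) (D₂.pts x.1.2.castSucc)
        = max (D₁.pts y.1.1.castSucc) (D₂.pts y.1.2.castSucc) := e1.symm.trans f1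
    have emin : min (D₁.pts x.1.1.succ) (D₂.pts x.1.2.succ)
        = min (D₁.pts y.1.1.succ) (D₂.pts y.1.2.succ) := e2.symm.trans f2
    have emax' : max (D₃.pts x.2.1.castSucc) (D₄.pts x.2.2.castSucc)
        = max (D₃.pts y.2.1.castSucc) (D₄.pts y.2.2.castSucc) := e3.symm.trans f3
    have emin' : min (D₃.pts x.2.1.succ) (D₄.pts x.2.2.succ)
        = min (D₃.pts y.2.1.succ) (D₄.pts y.2.2.succ) := e4.symm.trans f4
    have h11 : x.1.1 = y.1.1 := by
      refine grid_unique D₁ (le_max_left _ _) (min_le_left _ _) ?_ ?_ hPx.1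
      · rw [emax]; exact le_max_left _ _
      · rw [emin]; exact min_le_left _ _
    have h12 : x.1.2 = y.1.2 := by
      refine grid_unique D₂ (le_max_right _ _) (min_le_right _ _) ?_ ?_ hPx.1
      · rw [emax]; exact le_max_right _ _
      · rw [emin]; exact min_le_right _ _
    have h21 : x.2.1 = y.2.1 := by
      refine grid_unique D₃ (le_max_left _ _) (min_le_left _ _) ?_ ?_ hPx.2
      · rw [emax']; exact le_max_left _ _
      · rw [emin']; exact min_le_left _ _
    have h22 : x.2.2 = y.2.2 := by
      refine grid_unique D₄ (le_max_right _ _) (min_le_right _ _) ?_ ?_ hPx.2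
      · rw [emax']; exact le_max_right _ _
      · rw [emin']; exact min_le_right _ _
    exact Prod.ext (Prod.ext h11 h12) (Prod.ext h21 h22)

set_option maxHeartbeats 1000000 in
/-- for continuous `f : [0,1]² → ℝ` and `f̄(u₁,u₂,v₁,v₂) = f(u₁∧u₂, v₁∧v₂)`,
the 2D `p`-variation of `f` over `[s,t] × [σ,τ]` equals the 4D `p`-variation of `f̄` over
`[s,t]² × [σ,τ]²`, for any `s < t`, `σ < τ` and `p ≥ 1`. -/
theorem V2_eq_V4_of_min
    (f : ℝ → ℝ → ℝ)
    (hf : Continuous (fun q : ℝ × ℝ => f q.1 q.2))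
    (p : ℝ) (hp : 1 ≤ p)
    (s t σ τ : ℝ) (hst : s < t) (hστ : σ < τ)
    (hs : 0 ≤ s) (ht : t ≤ 1) (hσ : 0 ≤ σ) (hτ : τ ≤ 1) :
    V2 p f s t σ τ =
      V4 p (fun u₁ u₂ v₁ v₂ => f (min u₁ u₂) (min v₁ v₂)) s t s t σ τ σ τ := by
  classical
  have hp0 : (0:ℝ) < p := lt_of_lt_of_le one_pos hp
  have hp1 : (0:ℝ) ≤ 1 / p := by positivity
  apply le_antisymm
  · rw [V2, V4]
    refine iSup_le fun D => iSup_le fun E => ?_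
    refine le_iSup_of_le D ?_
    refine le_iSup_of_le D ?_
    refine le_iSup_of_le E ?_
    refine le_iSup_of_le E ?_
    exact ENNReal.rpow_le_rpow (diag_sum_le f p D E) hp1
  · rw [V2, V4]
    refine iSup_le fun D₁ => iSup_le fun D₂ => iSup_le fun D₃ => iSup_le fun D₄ => ?_
    obtain ⟨M, M', hkey⟩ := key_merge f p hp0 hst hστ D₁ D₂ D₃ D₄
    refine le_trans (ENNReal.rpow_le_rpow hkey hp1) ?_
    refine le_iSup_of_le M ?_
    exact le_iSup_of_le M' le_rfl

end
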